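/- arXiv:2604.19924 — 4 statements merged into one kernel-verified Lean document; each statement's English description precedes it below -/
import Mathlib

section
/- Let W : ℝ → [0,∞) be continuous on [0,∞), vanishing on (-∞,0), nondecreasing, and let h : ℝ → [0,∞) be locally bounded and nonnegative on [0, T-y]. Let μ be a nonnegative Radon measure on [y,T] with inf_{x∈[y,T]}(1 - W(0)μ{x}) > 0. Then the unique locally bounded solution H of H(x) = h(x-y) + ∫_{[y,x]} W(x-z) H(z) μ(dz), x ∈ [y,T], satisfies H(x) ≥ 0 for all x ∈ [y,T]. -/
open MeasureTheory Filter

theorem volterra_nonneg (W : ℝ → ℝ) (hWc : ContinuousOn W (Set.Ici 0))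
    (hWneg : ∀ x < (0 : ℝ), W x = 0) (hWnn : ∀ x, 0 ≤ W x) (hWmono : Monotone W)
    (y T : ℝ) (hyT : y ≤ T) (h : ℝ → ℝ)
    (hhb : ∃ M, ∀ u ∈ Set.Icc (0 : ℝ) (T - y), |h u| ≤ M)
    (hhnn : ∀ u ∈ Set.Icc (0 : ℝ) (T - y), 0 ≤ h u)
    (μ : Measure ℝ) [IsLocallyFiniteMeasure μ]
    (ε : ℝ) (hε : 0 < ε)
    (hatom : ∀ x ∈ Set.Icc y T, ε ≤ 1 - W 0 * (μ {x}).toReal)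
    (H : ℝ → ℝ)
    (hb : ∃ M, ∀ x ∈ Set.Icc y T, |H x| ≤ M)
    (he : ∀ x ∈ Set.Icc y T,
      H x = h (x - y) + ∫ z in Set.Icc y x, W (x - z) * H z ∂μ) :
    ∀ x ∈ Set.Icc y T, 0 ≤ H x := by
  obtain ⟨M, hM⟩ := hb
  obtain ⟨N, hNval⟩ : ∃ N : ℝ → ℝ, ∀ z, N z = max (-(H z)) 0 := ⟨_, fun z => rfl⟩
  have hNnn : ∀ z, 0 ≤ N z := fun z => (hNval z) ▸ le_max_right _ _
  have hM0 : 0 ≤ M := le_trans (abs_nonneg _) (hM y ⟨le_rfl, hyT⟩)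
  have hNM : ∀ z ∈ Set.Icc y T, N z ≤ M := by
    intro z hz
    have h1 := abs_le.1 (hM z hz)
    rw [hNval z]
    exact max_le (by linarith [h1.1]) hM0
  obtain ⟨C, hCdef⟩ : ∃ c : ℝ, c = W (T - y) := ⟨_, rfl⟩
  have hC0 : 0 ≤ C := hCdef ▸ hWnn _
  have hmaxid : ∀ c a : ℝ, 0 ≤ c → max (-(c * a)) 0 = c * max (-a) 0 := by
    intro c a hc
    rw [mul_max_of_nonneg _ _ hc, mul_zero, mul_neg]
  -- key inequality
  have keyIneq : ∀ x ∈ Set.Icc y T,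
      ε * N x ≤ ∫ z in Set.Ico y x, max (-(W (x - z) * H z)) 0 ∂μ := by
    intro x hx
    have hxy : (0:ℝ) ≤ x - y := by linarith [hx.1]
    have hxT : x - y ≤ T - y := by linarith [hx.2]
    have h3 : 0 ≤ h (x - y) := hhnn _ ⟨hxy, hxT⟩
    by_cases hint : IntegrableOn (fun z => W (x - z) * H z) (Set.Icc y x) μ
    · have hψint : IntegrableOn (fun z => max (-(W (x - z) * H z)) 0) (Set.Icc y x) μ :=
        hint.neg.pos_part
      have h2 : ∫ z in Set.Icc y x, (-(W (x - z) * H z)) ∂μ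
          ≤ ∫ z in Set.Icc y x, max (-(W (x - z) * H z)) 0 ∂μ :=
        integral_mono hint.neg hψint (fun z => le_max_left _ _)
      rw [integral_neg] at h2
      have heq := he x hx
      have h1 : -(H x) ≤ ∫ z in Set.Icc y x, max (-(W (x - z) * H z)) 0 ∂μ := by linarith
      have h0 : 0 ≤ ∫ z in Set.Icc y x, max (-(W (x - z) * H z)) 0 ∂μ :=
        setIntegral_nonneg measurableSet_Icc (fun z _ => le_max_right _ _)
      have hNle : N x ≤ ∫ z in Set.Icc y x, max (-(W (x - z) * H z)) 0 ∂μ := by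
        rw [hNval x]; exact max_le h1 h0
      have hdisj : Disjoint (Set.Ico y x) ({x} : Set ℝ) := by
        rw [Set.disjoint_singleton_right]; simp
      have hsub1 : Set.Ico y x ⊆ Set.Icc y x := Set.Ico_subset_Icc_self
      have hsub2 : ({x} : Set ℝ) ⊆ Set.Icc y x := by
        simp [Set.singleton_subset_iff, hx.1]
      have hsplit : ∫ z in Set.Icc y x, max (-(W (x - z) * H z)) 0 ∂μ
          = (∫ z in Set.Ico y x, max (-(W (x - z) * H z)) 0 ∂μ)
            + (μ {x}).toReal * (W 0 * N x) := by
        rw [← Set.Ico_union_right hx.1,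
          setIntegral_union hdisj (measurableSet_singleton x) (hψint.mono_set hsub1)
            (hψint.mono_set hsub2), integral_singleton]
        rw [smul_eq_mul, sub_self, hmaxid (W 0) (H x) (hWnn 0), hNval x]; rfl
      rw [hsplit] at hNle
      have hxa := hatom x hx
      have hμx0 : (0:ℝ) ≤ (μ {x}).toReal := ENNReal.toReal_nonneg
      nlinarith [mul_le_mul_of_nonneg_right hxa (hNnn x)]
    · have hHx : H x = h (x - y) := by
        rw [he x hx, integral_undef hint, add_zero]
      have hNx : N x = 0 := by
        rw [hNval x]; exact max_eq_right (by rw [hHx]; linarith)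
      rw [hNx, mul_zero]
      exact setIntegral_nonneg measurableSet_Ico (fun z _ => le_max_right _ _)
  -- the good set
  obtain ⟨Z, hZdef⟩ : ∃ Z : Set ℝ,
      Z = {x | x ∈ Set.Icc y T ∧ ∀ t ∈ Set.Icc y x, N t = 0} := ⟨_, rfl⟩
  have hZmem : ∀ x, x ∈ Z ↔ (x ∈ Set.Icc y T ∧ ∀ t ∈ Set.Icc y x, N t = 0) := by
    intro x; rw [hZdef]; rfl
  have hNy : N y = 0 := by
    have h1 := keyIneq y ⟨le_rfl, hyT⟩
    rw [Set.Ico_self, Measure.restrict_empty, integral_zero_measure] at h1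
    refine le_antisymm (le_of_mul_le_mul_left ?_ hε) (hNnn y)
    rw [mul_zero]; exact h1
  have hyZ : y ∈ Z := by
    rw [hZmem]
    refine ⟨⟨le_rfl, hyT⟩, fun t ht => ?_⟩
    have : t = y := le_antisymm ht.2 ht.1
    rw [this]; exact hNy
  have hZbdd : BddAbove Z := ⟨T, fun z hz => ((hZmem z).1 hz).1.2⟩
  have hZne : Z.Nonempty := ⟨y, hyZ⟩
  obtain ⟨s, hsdef⟩ : ∃ s : ℝ, s = sSup Z := ⟨_, rfl⟩
  have hys : y ≤ s := hsdef ▸ le_csSup hZbdd hyZ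
  have hsT : s ≤ T := hsdef ▸ csSup_le hZne (fun z hz => ((hZmem z).1 hz).1.2)
  have claim1a : ∀ t ∈ Set.Ico y s, N t = 0 := by
    intro t ht
    obtain ⟨z, hzZ, htz⟩ := exists_lt_of_lt_csSup hZne (hsdef ▸ ht.2)
    exact ((hZmem z).1 hzZ).2 t ⟨ht.1, htz.le⟩
  have hNs : N s = 0 := by
    have h1 := keyIneq s ⟨hys, hsT⟩
    have hzero : ∫ z in Set.Ico y s, max (-(W (s - z) * H z)) 0 ∂μ = 0 := by
      rw [setIntegral_congr_fun measurableSet_Ico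
        (g := fun _ => (0:ℝ)) (fun z hz => by
          show max (-(W (s - z) * H z)) 0 = 0
          rw [hmaxid _ _ (hWnn _), ← hNval z, claim1a z hz, mul_zero]), integral_zero]
    rw [hzero] at h1
    refine le_antisymm (le_of_mul_le_mul_left ?_ hε) (hNnn s)
    rw [mul_zero]; exact h1
  have claim1 : ∀ t ∈ Set.Icc y s, N t = 0 := by
    intro t ht
    rcases lt_or_eq_of_le ht.2 with h'|h'
    · exact claim1a t ⟨ht.1, h'⟩
    · rw [h']; exact hNs
  have hsT' : s = T := by
    by_contra hne
    have hslt : s < T := lt_of_le_of_ne hsT hne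
    obtain ⟨A, hAval⟩ : ∃ A : ℕ → Set ℝ,
        ∀ n : ℕ, A n = Set.Ioc s (s + 1/((n:ℝ)+1)) :=
      ⟨fun n => Set.Ioc s (s + 1/((n:ℝ)+1)), fun n => rfl⟩
    have hAmeas : ∀ n, NullMeasurableSet (A n) μ := fun n => by
      rw [hAval]; exact measurableSet_Ioc.nullMeasurableSet
    have hAanti : Antitone A := by
      intro a b hab
      rw [hAval, hAval]
      apply Set.Ioc_subset_Ioc_right
      have h1 : (a:ℝ) + 1 ≤ (b:ℝ) + 1 := by exact_mod_cast by omega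
      have h2 : (0:ℝ) < (a:ℝ) + 1 := by positivity
      gcongr
    have hA0fin : μ (A 0) ≠ ⊤ := by
      rw [hAval]
      refine ne_of_lt (lt_of_le_of_lt (measure_mono Set.Ioc_subset_Icc_self) ?_)
      exact IsCompact.measure_lt_top isCompact_Icc
    have hAn0fin : ∀ n, μ (A n) ≠ ⊤ := fun n =>
      ne_of_lt (lt_of_le_of_lt (measure_mono (hAanti (Nat.zero_le n))) (lt_top_iff_ne_top.2 hA0fin))
    have hAiInter : ⋂ n, A n = ∅ := by
      simp only [hAval]
      ext t
      simp only [Set.mem_iInter, Set.mem_Ioc, Set.mem_empty_iff_false, iff_false, not_forall]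
      by_contra hcon
      push_neg at hcon
      obtain ⟨n, hn⟩ := exists_nat_one_div_lt (show (0:ℝ) < t - s by linarith [(hcon 0).1])
      exact absurd ((hcon n).2) (by push_neg; linarith)
    have htend := tendsto_measure_iInter_atTop hAmeas hAanti ⟨0, hA0fin⟩
    rw [hAiInter, measure_empty] at htend
    obtain ⟨η, hηdef⟩ : ∃ η : ℝ, η = ε / (2 * (C + 1)) := ⟨_, rfl⟩
    have hη : 0 < η := by rw [hηdef]; positivity
    have hev : ∀ᶠ n in atTop, (μ ∘ A) n < ENNReal.ofReal η :=
      htend.eventually_lt_const (by simpa using hη)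
    obtain ⟨n₀, hn₀⟩ := hev.exists
    obtain ⟨δ, hδdef⟩ : ∃ δ : ℝ, δ = 1/((n₀:ℝ)+1) := ⟨_, rfl⟩
    have hδ : 0 < δ := by rw [hδdef]; positivity
    obtain ⟨x', hx'def⟩ : ∃ x' : ℝ, x' = min (s + δ) T := ⟨_, rfl⟩
    have hsx' : s < x' := hx'def ▸ lt_min (by linarith) hslt
    have hx'T : x' ≤ T := hx'def ▸ min_le_right _ _
    have hx'δ : x' ≤ s + δ := hx'def ▸ min_le_left _ _
    obtain ⟨m, hmdef⟩ : ∃ m : ℝ, m = (μ (A n₀)).toReal := ⟨_, rfl⟩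
    have hm0 : 0 ≤ m := hmdef ▸ ENNReal.toReal_nonneg
    have hmη : m < η := hmdef ▸ ENNReal.toReal_lt_of_lt_ofReal hn₀
    have hSbdd : BddAbove (N '' Set.Icc s x') := by
      refine ⟨M, ?_⟩
      rintro _ ⟨t, ht, rfl⟩
      exact hNM t ⟨le_trans hys ht.1, le_trans ht.2 hx'T⟩
    have hSne : (N '' Set.Icc s x').Nonempty :=
      ⟨N s, Set.mem_image_of_mem _ ⟨le_rfl, hsx'.le⟩⟩
    obtain ⟨S, hSdef⟩ : ∃ S : ℝ, S = sSup (N '' Set.Icc s x') := ⟨_, rfl⟩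
    have hS0 : 0 ≤ S := by
      have := le_csSup hSbdd (Set.mem_image_of_mem N ⟨le_rfl, hsx'.le⟩)
      rw [hNs] at this
      rw [hSdef]; exact this
    have hkey2 : ∀ x ∈ Set.Icc s x', N x ≤ S / 2 := by
      intro x hxm
      rcases eq_or_lt_of_le hxm.1 with he'|hlt
      · rw [← he', hNs]; linarith
      · have hxIcc : x ∈ Set.Icc y T := ⟨le_trans hys hxm.1, le_trans hxm.2 hx'T⟩
        have h1 := keyIneq x hxIcc
        have h2 : ∫ z in Set.Ico y x, max (-(W (x - z) * H z)) 0 ∂μ ≤ C * S * m := by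
          by_cases hint2 : IntegrableOn (fun z => max (-(W (x - z) * H z)) 0) (Set.Ico y x) μ
          · have hsplit2 : Set.Ico y x = Set.Icc y s ∪ Set.Ioo s x :=
              (Set.Icc_union_Ioo_eq_Ico hys hlt).symm
            have hdisj2 : Disjoint (Set.Icc y s) (Set.Ioo s x) := by
              rw [Set.disjoint_left]
              rintro t ⟨_, h1'⟩ ⟨h2', _⟩
              exact absurd h1' (not_le.2 h2')
            have hsubA : Set.Icc y s ⊆ Set.Ico y x := fun t ht =>
              ⟨ht.1, lt_of_le_of_lt ht.2 hlt⟩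
            have hsubB : Set.Ioo s x ⊆ Set.Ico y x := fun t ht =>
              ⟨le_trans hys ht.1.le, ht.2⟩
            rw [hsplit2, setIntegral_union hdisj2 measurableSet_Ioo
              (hint2.mono_set hsubA) (hint2.mono_set hsubB)]
            have hz1 : ∫ z in Set.Icc y s, max (-(W (x - z) * H z)) 0 ∂μ = 0 := by
              rw [setIntegral_congr_fun measurableSet_Icc
                (g := fun _ => (0:ℝ)) (fun z hz => by
                  show max (-(W (x - z) * H z)) 0 = 0
                  rw [hmaxid _ _ (hWnn _), ← hNval z, claim1 z hz, mul_zero]), integral_zero]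
            have hIooA : Set.Ioo s x ⊆ A n₀ := by
              rw [hAval]
              intro t ht
              refine ⟨ht.1, le_trans ht.2.le (le_trans hxm.2 (by rw [← hδdef]; exact hx'δ))⟩
            have hIoofin : μ (Set.Ioo s x) < ⊤ :=
              lt_of_le_of_lt (measure_mono hIooA) (lt_top_iff_ne_top.2 (hAn0fin n₀))
            have hbound : ∀ z ∈ Set.Ioo s x, ‖max (-(W (x - z) * H z)) 0‖ ≤ C * S := by
              intro z hz
              rw [Real.norm_eq_abs, abs_of_nonneg (le_max_right _ _),
                hmaxid _ _ (hWnn _), ← hNval z]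
              have hWle : W (x - z) ≤ C := by
                rw [hCdef]
                exact hWmono (by
                  have h1' := hz.1
                  have h2' := hxIcc.2
                  linarith)
              have hNS : N z ≤ S := by
                rw [hSdef]
                exact le_csSup hSbdd
                  (Set.mem_image_of_mem N ⟨hz.1.le, le_trans hz.2.le hxm.2⟩)
              exact mul_le_mul hWle hNS (hNnn z) hC0
            have hz2 : ∫ z in Set.Ioo s x, max (-(W (x - z) * H z)) 0 ∂μ
                ≤ C * S * (μ (Set.Ioo s x)).toReal := by
              refine le_trans (le_abs_self _) ?_
              rw [← Real.norm_eq_abs]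
              exact norm_setIntegral_le_of_norm_le_const hIoofin hbound
            have hz3 : C * S * (μ (Set.Ioo s x)).toReal ≤ C * S * m := by
              rw [hmdef]
              exact mul_le_mul_of_nonneg_left
                (ENNReal.toReal_mono (hAn0fin n₀) (measure_mono hIooA))
                (mul_nonneg hC0 hS0)
            linarith
          · rw [integral_undef hint2]
            positivity
        have h3 : C * S * m ≤ ε / 2 * S := by
          have hc1 : C * m ≤ (C + 1) * m := by nlinarith
          have hc2 : (C + 1) * m ≤ (C + 1) * η := by nlinarith
          have hc3 : (C + 1) * η = ε / 2 := by
            rw [hηdef]; field_simp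
          nlinarith
        have h4 : ε / 2 * S = ε * (S / 2) := by ring
        exact le_of_mul_le_mul_left (by linarith) hε
    have hS2 : S ≤ S / 2 := by
      rw [hSdef]
      refine csSup_le hSne ?_
      rintro _ ⟨x, hxm, rfl⟩
      calc N x ≤ S / 2 := hkey2 x hxm
        _ = sSup (N '' Set.Icc s x') / 2 := by rw [hSdef]
    have hx'Z : x' ∈ Z := by
      rw [hZmem]
      refine ⟨⟨le_trans hys hsx'.le, hx'T⟩, fun t ht => ?_⟩
      rcases le_or_gt t s with h'|h'
      · exact claim1 t ⟨ht.1, h'⟩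
      · have hNt : N t ≤ S := by
          rw [hSdef]
          exact le_csSup hSbdd (Set.mem_image_of_mem N ⟨h'.le, ht.2⟩)
        exact le_antisymm (by linarith) (hNnn t)
    have := le_csSup hZbdd hx'Z
    rw [← hsdef] at this
    exact absurd this (not_le.2 hsx')
  intro x hx
  have hNx : N x = 0 := claim1 x ⟨hx.1, hsT' ▸ hx.2⟩
  have h1 : -(H x) ≤ N x := (hNval x) ▸ le_max_left _ _
  rw [hNx] at h1
  linarith
end

section
/- Let W : ℝ → [0,∞) be nondecreasing, vanishing on (-∞,0), let ν be a nonnegative Radon measure, and let W_ν(·,·) be the solution to W_ν(x,y) = W(x-y) + ∫_{[y,x]} W(x-u) W_ν(u,y) ν(du), which is nonnegative. Then for fixed y the map x ↦ W_ν(x,y) is nondecreasing on [y,∞), and for fixed x the map y ↦ W_ν(x,y) is nonincreasing on (-∞,x]. -/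
open MeasureTheory Set
open scoped ENNReal

lemma wk_meas (W : ℝ → ℝ) (hWmono : Monotone W) (x : ℝ) :
    Measurable fun u : ℝ => W (x - u) :=
  hWmono.measurable.comp (measurable_const.sub measurable_id)

lemma msmall_right (ν : Measure ℝ) [IsLocallyFiniteMeasure ν] (a : ℝ) {ε : ℝ} (hε : 0 < ε) :
    ∃ δ : ℝ, 0 < δ ∧ δ ≤ 1 ∧ (ν (Ioc a (a + δ))).toReal < ε := by
  have hanti : Antitone fun n : ℕ => Ioc a (a + 1/((n:ℝ)+1)) := by
    intro m n hmn
    apply Ioc_subset_Ioc le_rfl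
    have : (1:ℝ)/((n:ℝ)+1) ≤ 1/((m:ℝ)+1) := by
      apply one_div_le_one_div_of_le (by positivity)
      exact_mod_cast Nat.succ_le_succ hmn
    linarith
  have hfin : ∀ n : ℕ, ν (Ioc a (a + 1/((n:ℝ)+1))) ≠ ⊤ := by
    intro n
    have h1 : Ioc a (a + 1/((n:ℝ)+1)) ⊆ Icc a (a + 1/((n:ℝ)+1)) := Ioc_subset_Icc_self
    exact ((measure_mono h1).trans_lt (isCompact_Icc.measure_lt_top)).ne
  have hint : (⋂ n : ℕ, Ioc a (a + 1/((n:ℝ)+1))) = ∅ := by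
    ext u
    simp only [mem_iInter, mem_Ioc, mem_empty_iff_false, iff_false, not_forall]
    by_contra h
    push_neg at h
    obtain ⟨n, hn⟩ := exists_nat_one_div_lt (show (0:ℝ) < u - a from sub_pos.2 (h 0).1)
    exact absurd (h n).2 (by push_cast at hn ⊢; linarith)
  have htend := tendsto_measure_iInter_atTop (μ := ν)
    (s := fun n : ℕ => Ioc a (a + 1/((n:ℝ)+1)))
    (fun n => measurableSet_Ioc.nullMeasurableSet) hanti ⟨0, hfin 0⟩
  rw [hint, measure_empty] at htend
  have hev := htend.eventually_lt_const (show (0:ℝ≥0∞) < ENNReal.ofReal ε by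
    simp [ENNReal.ofReal_pos, hε])
  obtain ⟨n, hn⟩ := hev.exists
  refine ⟨1/((n:ℝ)+1), by positivity, by
    rw [div_le_one (by positivity)]; linarith [Nat.cast_nonneg (α := ℝ) n], ?_⟩
  exact ENNReal.toReal_lt_of_lt_ofReal hn

lemma msmall_left (ν : Measure ℝ) [IsLocallyFiniteMeasure ν] (a : ℝ) {Δ ε : ℝ} (hΔ : 0 < Δ)
    (hε : 0 < ε) :
    ∃ δ : ℝ, 0 < δ ∧ δ ≤ Δ ∧ (ν (Ioo (a - δ) a)).toReal < ε := by
  have hanti : Antitone fun n : ℕ => Ioo (a - Δ/((n:ℝ)+1)) a := by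
    intro m n hmn
    apply Ioo_subset_Ioo _ le_rfl
    have : Δ/((n:ℝ)+1) ≤ Δ/((m:ℝ)+1) := by
      apply div_le_div_of_nonneg_left hΔ.le (by positivity)
      exact_mod_cast Nat.succ_le_succ hmn
    linarith
  have hfin : ∀ n : ℕ, ν (Ioo (a - Δ/((n:ℝ)+1)) a) ≠ ⊤ := by
    intro n
    have h1 : Ioo (a - Δ/((n:ℝ)+1)) a ⊆ Icc (a - Δ/((n:ℝ)+1)) a := Ioo_subset_Icc_self
    exact ((measure_mono h1).trans_lt (isCompact_Icc.measure_lt_top)).ne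
  have hint : (⋂ n : ℕ, Ioo (a - Δ/((n:ℝ)+1)) a) = ∅ := by
    ext u
    simp only [mem_iInter, mem_Ioo, mem_empty_iff_false, iff_false, not_forall]
    by_contra h
    push_neg at h
    have h01 := (h 0).1
    have h02 := (h 0).2
    obtain ⟨n, hn⟩ := exists_nat_one_div_lt (show (0:ℝ) < (a - u)/Δ from
      div_pos (by linarith) hΔ)
    have h2 : a - u < Δ/((n:ℝ)+1) := by linarith [(h n).1]
    rw [div_lt_div_iff₀ (by positivity) hΔ] at hn
    rw [lt_div_iff₀ (by positivity)] at h2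
    linarith
  have htend := tendsto_measure_iInter_atTop (μ := ν)
    (s := fun n : ℕ => Ioo (a - Δ/((n:ℝ)+1)) a)
    (fun n => measurableSet_Ioo.nullMeasurableSet) hanti ⟨0, hfin 0⟩
  rw [hint, measure_empty] at htend
  have hev := htend.eventually_lt_const (show (0:ℝ≥0∞) < ENNReal.ofReal ε by
    simp [ENNReal.ofReal_pos, hε])
  obtain ⟨n, hn⟩ := hev.exists
  refine ⟨Δ/((n:ℝ)+1), by positivity, by
    rw [div_le_iff₀ (by positivity)]; nlinarith [Nat.cast_nonneg (α := ℝ) n, hΔ], ?_⟩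
  exact ENNReal.toReal_lt_of_lt_ofReal hn

lemma fzero_of_lt (W : ℝ → ℝ) (hWneg : ∀ x < (0:ℝ), W x = 0)
    (ν : Measure ℝ) (y : ℝ) (f : ℝ → ℝ)
    (feq : ∀ x, f x = W (x - y) + ∫ u in Icc y x, W (x - u) * f u ∂ν)
    {x : ℝ} (hx : x < y) : f x = 0 := by
  have h := feq x
  rw [Icc_eq_empty (not_le.2 hx), Measure.restrict_empty, integral_zero_measure,
    hWneg (x - y) (by linarith)] at h
  simpa using h

lemma atom_small (W : ℝ → ℝ) (hWnn : ∀ x, 0 ≤ W x)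
    (ν : Measure ℝ) [IsLocallyFiniteMeasure ν] (a : ℝ) (f : ℝ → ℝ)
    (feq : ∀ x, f x = W (x - a) + ∫ u in Icc a x, W (x - u) * f u ∂ν)
    (fnn : ∀ x, 0 ≤ f x) :
    (ν {a}).toReal * W 0 < 1 := by
  have h := feq a
  rw [Icc_self, Measure.restrict_singleton, integral_smul_measure, integral_dirac] at h
  simp only [sub_self, smul_eq_mul] at h
  set m := (ν {a}).toReal with hm
  have hm0 : 0 ≤ m := ENNReal.toReal_nonneg
  have hW0 : 0 ≤ W 0 := hWnn 0
  have hf0 : 0 ≤ f a := fnn a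
  by_contra h1
  push_neg at h1
  have hW0pos : 0 < W 0 := by
    rcases hW0.lt_or_eq with h2 | h2
    · exact h2
    · rw [← h2] at h1; simp at h1; linarith
  nlinarith [mul_le_mul_of_nonneg_right h1 hf0]

lemma keyPB (W : ℝ → ℝ) (hWmono : Monotone W)
    (ν : Measure ℝ) (y : ℝ) (f : ℝ → ℝ)
    (feq : ∀ x, f x = W (x - y) + ∫ u in Icc y x, W (x - u) * f u ∂ν)
    (fnn : ∀ x, 0 ≤ f x)
    {t C : ℝ} (hC1 : 1 ≤ C) (hCW : W (t - y) ≤ C)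
    (hft : IntegrableOn f (Icc y t) ν)
    (hgood : ∀ v ∈ Icc y t, IntegrableOn (fun u => W (v - u) * f u) (Icc y v) ν) :
    ∀ v ∈ Icc y t, f v ≤ C + C * ∫ u in Icc y t, f u ∂ν := by
  intro v hv
  obtain ⟨hyv, hvt⟩ := hv
  have h1 : W (v - y) ≤ C := le_trans (hWmono (by linarith)) hCW
  have h2 : ∫ u in Icc y v, W (v - u) * f u ∂ν ≤ ∫ u in Icc y v, C * f u ∂ν := by
    apply setIntegral_mono_on (hgood v ⟨hyv, hvt⟩)
      ((hft.mono_set (Icc_subset_Icc_right hvt)).const_mul C) measurableSet_Icc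
    intro u hu
    have hk : W (v - u) ≤ C := le_trans (hWmono (by
      have := hu.1; have := hu.2; linarith : v - u ≤ t - y)) hCW
    exact mul_le_mul_of_nonneg_right hk (fnn u)
  have h3 : ∫ u in Icc y v, C * f u ∂ν = C * ∫ u in Icc y v, f u ∂ν :=
    integral_const_mul _ _
  have h4 : ∫ u in Icc y v, f u ∂ν ≤ ∫ u in Icc y t, f u ∂ν :=
    setIntegral_mono_set hft (Filter.Eventually.of_forall fun u => fnn u)
      ((Icc_subset_Icc_right hvt).eventuallyLE)
  have h5 := mul_le_mul_of_nonneg_left h4 (le_trans zero_le_one hC1)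
  have h6 := feq v
  linarith

lemma keyL1 (W : ℝ → ℝ) (hWmono : Monotone W) (hWnn : ∀ x, 0 ≤ W x)
    (ν : Measure ℝ) (f : ℝ → ℝ) {x₁ x₂ : ℝ} (h12 : x₁ ≤ x₂) {s : Set ℝ}
    (hint : IntegrableOn (fun u => W (x₂ - u) * f u) s ν) :
    IntegrableOn (fun u => W (x₁ - u) * f u) s ν := by
  classical
  set h : ℝ → ℝ := fun u => if W (x₂ - u) = 0 then 0 else W (x₁ - u) / W (x₂ - u) with hh
  have hhm : Measurable h := by
    apply Measurable.ite _ measurable_const ((wk_meas W hWmono x₁).div (wk_meas W hWmono x₂))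
    exact (wk_meas W hWmono x₂) (measurableSet_singleton 0)
  have hhb : ∀ u, ‖h u‖ ≤ 1 := by
    intro u
    rw [hh]
    by_cases hc : W (x₂ - u) = 0
    · simp [hc]
    · simp only [if_neg hc]
      rw [Real.norm_eq_abs, abs_of_nonneg (div_nonneg (hWnn _) (hWnn _))]
      exact div_le_one_of_le₀ (hWmono (by linarith)) (hWnn _)
  have hid : ∀ u, W (x₁ - u) * f u = h u * (W (x₂ - u) * f u) := by
    intro u
    rw [hh]
    by_cases hc : W (x₂ - u) = 0
    · simp only [if_pos hc]
      have h0 : W (x₁ - u) = 0 := le_antisymm (hc ▸ hWmono (by linarith)) (hWnn _)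
      rw [h0]; ring
    · simp only [if_neg hc]; field_simp
  exact (Integrable.bdd_mul hint hhm.aestronglyMeasurable
    (Filter.Eventually.of_forall hhb)).congr (Filter.Eventually.of_forall fun u => (hid u).symm)

-- L2: division lemma (needs W > 0 on (0,∞))
lemma keyL2 (W : ℝ → ℝ) (hWmono : Monotone W) (hWnn : ∀ x, 0 ≤ W x)
    (hWpos : ∀ s : ℝ, 0 < s → 0 < W s)
    (ν : Measure ℝ) (y : ℝ) (f : ℝ → ℝ) {t x : ℝ} (hyt : y ≤ t) (htx : t < x)
    (hint : IntegrableOn (fun u => W (x - u) * f u) (Icc y x) ν) :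
    IntegrableOn f (Icc y t) ν := by
  have hint' : IntegrableOn (fun u => W (x - u) * f u) (Icc y t) ν :=
    hint.mono_set (Icc_subset_Icc_right htx.le)
  have hWt : 0 < W (x - t) := hWpos _ (by linarith)
  have hinvm : Measurable fun u : ℝ => (W (x - u))⁻¹ := (wk_meas W hWmono x).inv
  apply (Integrable.bdd_mul (c := (W (x - t))⁻¹) hint' hinvm.aestronglyMeasurable ?_).congr ?_
  · filter_upwards [ae_restrict_mem measurableSet_Icc] with u hu
    have h1 : W (x - t) ≤ W (x - u) := hWmono (by linarith [hu.2])
    rw [Real.norm_eq_abs, abs_of_nonneg (inv_nonneg.2 (hWnn _))]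
    exact inv_anti₀ hWt h1
  · filter_upwards [ae_restrict_mem measurableSet_Icc] with u hu
    have hWu : 0 < W (x - u) := hWpos _ (by linarith [hu.2])
    show (W (x - u))⁻¹ * (W (x - u) * f u) = f u
    field_simp

lemma integrableOn_of_bounded' {f : ℝ → ℝ} {s : Set ℝ} {ν : Measure ℝ} (hs : ν s ≠ ∞)
    (hm : AEStronglyMeasurable f (ν.restrict s)) {M : ℝ}
    (hb : ∀ᵐ u ∂(ν.restrict s), ‖f u‖ ≤ M) : IntegrableOn f s ν :=
  ⟨hm, HasFiniteIntegral.restrict_of_bounded M hs.lt_top hb⟩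

lemma keyB (W : ℝ → ℝ) (hWmono : Monotone W) (hWneg : ∀ x < (0:ℝ), W x = 0)
    (hWnn : ∀ x, 0 ≤ W x)
    (ν : Measure ℝ) [IsLocallyFiniteMeasure ν] (y : ℝ) (f : ℝ → ℝ)
    (feq : ∀ x, f x = W (x - y) + ∫ u in Icc y x, W (x - u) * f u ∂ν)
    (fnn : ∀ x, 0 ≤ f x)
    {σ : ℝ} (hσ : 0 < σ) (hWσ : W σ = 0) :
    ∀ T : ℝ, IntegrableOn f (Icc y T) ν ∧ ∃ M, ∀ v ∈ Icc y T, f v ≤ M := by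
  have hW0 : ∀ s ≤ σ, W s = 0 := fun s hs => le_antisymm (hWσ ▸ hWmono hs) (hWnn s)
  -- main induction: on each block Icc y (y + n•σ), f agrees with a measurable function and is bounded
  have main : ∀ n : ℕ, ∃ (fb : ℝ → ℝ) (M : ℝ), Measurable fb ∧
      (∀ u ∈ Icc y (y + n * σ), f u = fb u) ∧ (∀ u ∈ Icc y (y + n * σ), f u ≤ M) ∧ 0 ≤ M := by
    intro n
    induction n with
    | zero =>
      refine ⟨fun _ => f y, f y, measurable_const, ?_, ?_, fnn y⟩ <;>
      · intro u hu
        simp only [Nat.cast_zero, zero_mul, add_zero] at hu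
        rw [show u = y from le_antisymm hu.2 hu.1]
    | succ n ih =>
      obtain ⟨fb, M, hfbm, hagree, hbd, hM0⟩ := ih
      set S : Set ℝ := Icc y (y + n * σ) with hS
      set fb' : ℝ → ℝ := fun u => if u ∈ S then max (min (fb u) M) 0 else 0 with hfb'
      have hfb'm : Measurable fb' := by
        apply Measurable.ite measurableSet_Icc _ measurable_const
        exact ((hfbm.min measurable_const).max measurable_const)
      have hfb'1 : ∀ u ∈ S, fb' u = f u := by
        intro u hu
        simp only [hfb', if_pos hu]
        rw [← hagree u hu, min_eq_left (hbd u hu), max_eq_left (fnn u)]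
      have hfb'b : ∀ u, 0 ≤ fb' u ∧ fb' u ≤ M := by
        intro u
        by_cases hu : u ∈ S
        · simp only [hfb', if_pos hu]
          exact ⟨le_max_right _ _, max_le (min_le_right _ _) hM0⟩
        · simp only [hfb', if_neg hu]; exact ⟨le_rfl, hM0⟩
      -- the integrands agree on the next block
      have hcongr : ∀ x ∈ Icc y (y + (n+1 : ℕ) * σ), ∀ u ∈ Icc y x,
          W (x - u) * f u = W (x - u) * fb' u := by
        intro x hx u hu
        rcases le_or_gt u (x - σ) with h | h
        · have huS : u ∈ S := by
            refine ⟨hu.1, ?_⟩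
            have h2 := hx.2
            push_cast at h2
            linarith
          rw [hfb'1 u huS]
        · rw [hW0 (x - u) (by linarith [hu.2])]
          ring
      set F : ℝ → ℝ := fun x => W (x - y) +
        ∫ u, (if y ≤ u ∧ u ≤ x then W (x - u) * fb' u else 0) ∂ν with hF
      have hrw : ∀ x : ℝ, ∫ u, (if y ≤ u ∧ u ≤ x then W (x - u) * fb' u else 0) ∂ν
          = ∫ u in Icc y x, W (x - u) * fb' u ∂ν := by
        intro x
        rw [← integral_indicator measurableSet_Icc]
        congr 1
        funext u
        simp [Set.indicator_apply, mem_Icc]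
      have hFeq : ∀ x ∈ Icc y (y + (n+1 : ℕ) * σ), f x = F x := by
        intro x hx
        rw [feq x, hF]
        simp only
        rw [hrw x]
        congr 1
        exact setIntegral_congr_fun measurableSet_Icc (fun u hu => hcongr x hx u hu)
      have hFmeas : Measurable F := by
        apply Measurable.add (hWmono.measurable.comp (measurable_id.sub measurable_const))
        have hsm : StronglyMeasurable fun p : ℝ × ℝ =>
            if y ≤ p.2 ∧ p.2 ≤ p.1 then W (p.1 - p.2) * fb' p.2 else 0 := by
          apply Measurable.stronglyMeasurable
          apply Measurable.ite
          · exact (measurableSet_le measurable_const measurable_snd).inter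
              (measurableSet_le measurable_snd measurable_fst)
          · exact (hWmono.measurable.comp (measurable_fst.sub measurable_snd)).mul
              (hfb'm.comp measurable_snd)
          · exact measurable_const
        exact (hsm.integral_prod_right' (ν := ν)).measurable
      -- bound on the new block
      set K : ℝ := W ((n + 1 : ℕ) * σ) with hK
      have hK0 : 0 ≤ K := hWnn _
      set Cν : ℝ := (ν (Icc y (y + (n+1 : ℕ) * σ))).toReal with hCν
      have hCν0 : 0 ≤ Cν := ENNReal.toReal_nonneg
      have hbound : ∀ x ∈ Icc y (y + (n+1 : ℕ) * σ), f x ≤ K + K * M * Cν := by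
        intro x hx
        have hxy : x - y ≤ (n+1 : ℕ) * σ := by linarith [hx.2]
        have hWxy : W (x - y) ≤ K := hWmono hxy
        have hint : IntegrableOn (fun u => W (x - u) * fb' u) (Icc y x) ν := by
          apply integrableOn_of_bounded' (isCompact_Icc.measure_lt_top).ne
            (((wk_meas W hWmono x).mul hfb'm).aestronglyMeasurable.restrict)
            (M := K * M)
          filter_upwards [ae_restrict_mem measurableSet_Icc] with u hu
          rw [Real.norm_eq_abs]; show |W (x - u) * fb' u| ≤ K * M; rw [abs_of_nonneg (mul_nonneg (hWnn _) (hfb'b u).1)]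
          exact mul_le_mul (hWmono (by linarith [hu.1, hxy])) (hfb'b u).2 (hfb'b u).1 hK0
        have h1 : ∫ u in Icc y x, W (x - u) * fb' u ∂ν ≤ ∫ u in Icc y x, K * M ∂ν := by
          apply setIntegral_mono_on hint
            ((integrableOn_const_iff (C := K * M)).2 (Or.inr isCompact_Icc.measure_lt_top))
            measurableSet_Icc
          intro u hu
          exact mul_le_mul (hWmono (by linarith [hu.1, hxy])) (hfb'b u).2 (hfb'b u).1 hK0
        rw [setIntegral_const, measureReal_def] at h1
        have h2 : (ν (Icc y x)).toReal ≤ Cν := by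
          apply ENNReal.toReal_mono (isCompact_Icc.measure_lt_top).ne
          exact measure_mono (Icc_subset_Icc_right hx.2)
        have h3 : (ν (Icc y x)).toReal • (K * M) ≤ K * M * Cν := by
          rw [smul_eq_mul]
          nlinarith [mul_nonneg hK0 hM0]
        have h4 := hFeq x hx
        rw [hF] at h4
        simp only at h4
        rw [hrw x] at h4
        linarith
      refine ⟨F, K + K * M * Cν, hFmeas, hFeq, hbound, ?_⟩
      have := hbound y ⟨le_rfl, le_add_of_nonneg_right (by positivity)⟩
      linarith [fnn y]
  -- conclude
  intro T
  rcases lt_or_ge T y with hT | hT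
  · rw [Icc_eq_empty (not_le.2 hT)]
    exact ⟨integrableOn_empty, 0, fun v hv => absurd hv (notMem_empty v)⟩
  · set n : ℕ := ⌈(T - y)/σ⌉₊ with hn
    have hTn : T ≤ y + n * σ := by
      have h1 : (T - y)/σ ≤ n := Nat.le_ceil _
      rw [div_le_iff₀ hσ] at h1
      linarith
    obtain ⟨fb, M, hfbm, hagree, hbd, hM0⟩ := main n
    have hsub : Icc y T ⊆ Icc y (y + n * σ) := Icc_subset_Icc_right hTn
    have haesm : AEStronglyMeasurable f (ν.restrict (Icc y T)) := by
      apply (hfbm.stronglyMeasurable.aestronglyMeasurable.restrict).congr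
      filter_upwards [ae_restrict_mem measurableSet_Icc] with u hu
      exact (hagree u (hsub hu)).symm
    refine ⟨integrableOn_of_bounded' (isCompact_Icc.measure_lt_top).ne haesm (M := M) ?_,
      M, fun v hv => hbd v (hsub hv)⟩
    filter_upwards [ae_restrict_mem measurableSet_Icc] with u hu
    rw [Real.norm_eq_abs, abs_of_nonneg (fnn u)]
    exact hbd u (hsub hu)

lemma keyA (W : ℝ → ℝ) (hWmono : Monotone W) (hWneg : ∀ x < (0:ℝ), W x = 0)
    (hWnn : ∀ x, 0 ≤ W x)
    (ν : Measure ℝ) [IsLocallyFiniteMeasure ν] (y : ℝ) (f : ℝ → ℝ)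
    (feq : ∀ x, f x = W (x - y) + ∫ u in Icc y x, W (x - u) * f u ∂ν)
    (fnn : ∀ x, 0 ≤ f x)
    (hWpos : ∀ s : ℝ, 0 < s → 0 < W s) :
    ∀ T : ℝ, IntegrableOn f (Icc y T) ν ∧ ∃ M, ∀ v ∈ Icc y T, f v ≤ M := by
  classical
  set Ebad : Set ℝ := {x : ℝ | y ≤ x ∧ ¬ IntegrableOn (fun u => W (x - u) * f u) (Icc y x) ν}
    with hEbad
  have hEup : ∀ {x z : ℝ}, x ∈ Ebad → x ≤ z → z ∈ Ebad := by
    intro x z hx hxz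
    refine ⟨hx.1.trans hxz, fun hc => hx.2 ?_⟩
    exact keyL1 W hWmono hWnn ν f hxz (hc.mono_set (Icc_subset_Icc_right hxz))
  have hEval : ∀ {x : ℝ}, x ∈ Ebad → f x = W (x - y) := by
    intro x hx
    rw [feq x, integral_undef hx.2, add_zero]
  by_cases hE : Ebad = ∅
  · -- everything integrable
    have hgood : ∀ x, y ≤ x → IntegrableOn (fun u => W (x - u) * f u) (Icc y x) ν := by
      intro x hx
      by_contra hc
      exact absurd (show x ∈ Ebad from ⟨hx, hc⟩) (by rw [hE]; exact notMem_empty x)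
    intro T
    rcases lt_or_ge T y with hT | hT
    · rw [Icc_eq_empty (not_le.2 hT)]
      exact ⟨integrableOn_empty, 0, fun v hv => absurd hv (notMem_empty v)⟩
    · have hft : IntegrableOn f (Icc y T) ν :=
        keyL2 W hWmono hWnn hWpos ν y f hT (lt_add_one T) (hgood (T+1) (by linarith))
      set C := max 1 (W (T - y)) with hC
      have hPB := keyPB W hWmono ν y f feq fnn (t := T) (C := C) (le_max_left _ _)
        (le_max_right _ _) hft (fun v hv => hgood v hv.1)
      exact ⟨hft, C + C * ∫ u in Icc y T, f u ∂ν, hPB⟩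
  · -- there are bad points
    have hne : Ebad.Nonempty := nonempty_iff_ne_empty.2 hE
    have hbdd : BddBelow Ebad := ⟨y, fun e he => he.1⟩
    set xs := sInf Ebad with hxs
    have hxs_y : y ≤ xs := le_csInf hne (fun e he => he.1)
    have hgoodlt : ∀ v, y ≤ v → v < xs →
        IntegrableOn (fun u => W (v - u) * f u) (Icc y v) ν := by
      intro v hyv hvx
      by_contra hc
      exact absurd (csInf_le hbdd ⟨hyv, hc⟩) (not_le.2 hvx)
    have hbeyond : ∀ z, xs < z → f z = W (z - y) := by
      intro z hz
      obtain ⟨e, he, hez⟩ := exists_lt_of_csInf_lt hne hz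
      exact hEval (hEup he hez.le)
    have hintlt : ∀ t, y ≤ t → t < xs → IntegrableOn f (Icc y t) ν := by
      intro t hyt htxs
      exact keyL2 W hWmono hWnn hWpos ν y f hyt (show t < (t + xs)/2 by linarith)
        (hgoodlt _ (by linarith) (by linarith))
    set C := max 1 (W (xs + 2 - y)) with hC
    have hC1 : (1:ℝ) ≤ C := le_max_left _ _
    have hC0 : (0:ℝ) ≤ C := by linarith
    -- uniform bound on integrals below xs (Gronwall)
    have hIbdd : ∃ B : ℝ, 0 ≤ B ∧ ∀ t, y ≤ t → t < xs → ∫ u in Icc y t, f u ∂ν ≤ B := by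
      rcases eq_or_lt_of_le hxs_y with heq | hlt
      · exact ⟨0, le_rfl, fun t hyt htxs => absurd htxs (not_lt.2 (heq ▸ hyt))⟩
      · obtain ⟨δ, hδ0, hδxs, hδsmall⟩ := msmall_left ν xs (show (0:ℝ) < xs - y by linarith)
          (show (0:ℝ) < 1/(2*C) by positivity)
        set t₀ := xs - δ with ht₀
        have hyt₀ : y ≤ t₀ := by simp only [ht₀]; linarith
        have ht₀xs : t₀ < xs := by simp only [ht₀]; linarith
        have hft₀ : IntegrableOn f (Icc y t₀) ν := hintlt t₀ hyt₀ ht₀xs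
        set A := ∫ u in Icc y t₀, f u ∂ν with hA
        have hA0 : 0 ≤ A := setIntegral_nonneg measurableSet_Icc (fun u _ => fnn u)
        refine ⟨2*A + 1, by linarith, ?_⟩
        intro t hyt htxs
        have hft : IntegrableOn f (Icc y t) ν := hintlt t hyt htxs
        set It := ∫ u in Icc y t, f u ∂ν with hIt
        have hIt0 : 0 ≤ It := setIntegral_nonneg measurableSet_Icc (fun u _ => fnn u)
        rcases le_or_gt t t₀ with hcase | hcase
        · have : It ≤ A := setIntegral_mono_set hft₀ (Filter.Eventually.of_forall fnn)
            ((Icc_subset_Icc_right hcase).eventuallyLE)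
          linarith
        · have hsplit : Icc y t = Icc y t₀ ∪ Ioc t₀ t := (Icc_union_Ioc_eq_Icc hyt₀ hcase.le).symm
          have hdisj : Disjoint (Icc y t₀) (Ioc t₀ t) := by
            apply Set.disjoint_left.2
            intro u hu1 hu2
            exact absurd hu1.2 (not_le.2 hu2.1)
          have hsub1 : Icc y t₀ ⊆ Icc y t := Icc_subset_Icc_right hcase.le
          have hsub2 : Ioc t₀ t ⊆ Icc y t := fun u hu => ⟨by linarith [hu.1], hu.2⟩
          have hIt_eq : It = A + ∫ u in Ioc t₀ t, f u ∂ν := by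
            rw [hIt, hsplit,
              setIntegral_union hdisj measurableSet_Ioc (hft.mono_set hsub1)
                (hft.mono_set hsub2)]
          have hPB := keyPB W hWmono ν y f feq fnn (t := t) (C := C) hC1
            (le_trans (hWmono (by linarith)) (le_max_right _ _)) hft
            (fun v hv => hgoodlt v hv.1 (lt_of_le_of_lt hv.2 htxs))
          have h2 : ∫ u in Ioc t₀ t, f u ∂ν ≤ (C + C * It) * (ν (Ioc t₀ t)).toReal := by
            have h2a := setIntegral_mono_on (hft.mono_set hsub2)
              ((integrableOn_const_iff (C := C + C * It)).2
                (Or.inr ((measure_mono Ioc_subset_Icc_self).trans_lt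
                  isCompact_Icc.measure_lt_top)))
              measurableSet_Ioc (fun u hu => hPB u (hsub2 hu))
            rw [setIntegral_const, measureReal_def, smul_eq_mul, mul_comm] at h2a
            exact h2a
          have h3 : (ν (Ioc t₀ t)).toReal ≤ (ν (Ioo (xs - δ) xs)).toReal := by
            apply ENNReal.toReal_mono
              ((measure_mono Ioo_subset_Icc_self).trans_lt isCompact_Icc.measure_lt_top).ne
            apply measure_mono
            intro u hu
            exact ⟨by simp only [ht₀] at hu; exact hu.1, lt_of_le_of_lt hu.2 htxs⟩
          have h4 : C * (ν (Ioo (xs - δ) xs)).toReal ≤ 1/2 := by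
            have hρ0 : 0 ≤ (ν (Ioo (xs - δ) xs)).toReal := ENNReal.toReal_nonneg
            have hCpos : (0:ℝ) < C := by linarith
            rw [div_eq_mul_inv, one_mul] at hδsmall
            calc C * (ν (Ioo (xs - δ) xs)).toReal ≤ C * (2*C)⁻¹ := by
                  apply mul_le_mul_of_nonneg_left (le_of_lt hδsmall) hC0
              _ ≤ 1/2 := by
                  rw [mul_inv, ← mul_assoc, mul_comm C 2⁻¹, mul_assoc,
                    mul_inv_cancel₀ hCpos.ne', mul_one]
                  norm_num
          have hρ'0 : 0 ≤ (ν (Ioc t₀ t)).toReal := ENNReal.toReal_nonneg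
          have hCC : 0 ≤ C + C * It := by nlinarith
          have h5 : (C + C * It) * (ν (Ioc t₀ t)).toReal
              ≤ (C + C * It) * (ν (Ioo (xs - δ) xs)).toReal :=
            mul_le_mul_of_nonneg_left h3 hCC
          nlinarith [mul_le_mul_of_nonneg_right h4 hIt0]
    obtain ⟨B, hB0, hIB⟩ := hIbdd
    have hfb : ∀ v, y ≤ v → v < xs → f v ≤ C + C * B := by
      intro v hyv hvxs
      have hft : IntegrableOn f (Icc y v) ν := hintlt v hyv hvxs
      have hPB := keyPB W hWmono ν y f feq fnn (t := v) (C := C) hC1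
        (le_trans (hWmono (by linarith)) (le_max_right _ _)) hft
        (fun w hw => hgoodlt w hw.1 (lt_of_le_of_lt hw.2 hvxs))
      have h1 := hPB v ⟨hyv, le_rfl⟩
      have h2 := hIB v hyv hvxs
      nlinarith
    -- integrability on Ico y xs
    have hIcoInt : IntegrableOn f (Ico y xs) ν := by
      rcases eq_or_lt_of_le hxs_y with heq | hlt
      · rw [← heq, Ico_self]
        exact integrableOn_empty
      · have hU : (⋃ n : ℕ, Icc y (xs - (xs - y)/((n:ℝ)+1))) = Ico y xs := by
          ext u
          simp only [mem_iUnion, mem_Icc, mem_Ico]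
          constructor
          · rintro ⟨n, h1, h2⟩
            refine ⟨h1, lt_of_le_of_lt h2 ?_⟩
            have : 0 < (xs - y)/((n:ℝ)+1) := div_pos (by linarith) (by positivity)
            linarith
          · rintro ⟨h1, h2⟩
            obtain ⟨n, hn⟩ := exists_nat_one_div_lt (show (0:ℝ) < (xs - u)/(xs - y) from
              div_pos (by linarith) (by linarith))
            refine ⟨n, h1, ?_⟩
            rw [div_lt_div_iff₀ (by positivity) (by linarith)] at hn
            have h3 : (xs - y)/((n:ℝ)+1) ≤ xs - u := by
              rw [div_le_iff₀ (by positivity)]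
              nlinarith
            linarith
        have haem : AEMeasurable f (ν.restrict (Ico y xs)) := by
          rw [← hU]
          apply AEMeasurable.iUnion
          intro n
          have hn1 : y ≤ xs - (xs - y)/((n:ℝ)+1) := by
            have h1 : (xs - y)/((n:ℝ)+1) ≤ xs - y := by
              apply div_le_self (by linarith)
              linarith [Nat.cast_nonneg (α := ℝ) n]
            linarith
          have hn2 : xs - (xs - y)/((n:ℝ)+1) < xs := by
            have : 0 < (xs - y)/((n:ℝ)+1) := div_pos (by linarith) (by positivity)
            linarith
          exact (hintlt _ hn1 hn2).aemeasurable
        apply integrableOn_of_bounded' (M := C + C * B)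
          ((measure_mono Ico_subset_Icc_self).trans_lt isCompact_Icc.measure_lt_top).ne
          haem.aestronglyMeasurable
        filter_upwards [ae_restrict_mem measurableSet_Ico] with u hu
        rw [Real.norm_eq_abs, abs_of_nonneg (fnn u)]
        exact hfb u hu.1 hu.2
    -- conclusion
    intro T
    rcases lt_or_ge T y with hT | hT
    · rw [Icc_eq_empty (not_le.2 hT)]
      exact ⟨integrableOn_empty, 0, fun v hv => absurd hv (notMem_empty v)⟩
    rcases lt_or_ge T xs with hTxs | hTxs
    · exact ⟨hintlt T hT hTxs, C + C * B, fun v hv => hfb v hv.1 (lt_of_le_of_lt hv.2 hTxs)⟩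
    · have p2 : IntegrableOn f ({xs} : Set ℝ) ν := by
        apply integrableOn_of_bounded' (M := f xs)
          ((measure_mono (show ({xs} : Set ℝ) ⊆ Icc xs xs by simp)).trans_lt
            isCompact_Icc.measure_lt_top).ne
        · apply aestronglyMeasurable_const.congr
          filter_upwards [ae_restrict_mem (measurableSet_singleton xs)] with u hu
          rw [show u = xs from hu]
        · filter_upwards [ae_restrict_mem (measurableSet_singleton xs)] with u hu
          rw [show u = xs from hu, Real.norm_eq_abs, abs_of_nonneg (fnn xs)]
      have p3 : IntegrableOn f (Ioc xs T) ν := by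
        have hm : Monotone fun u : ℝ => W (u - y) :=
          fun a b hab => hWmono (by linarith)
        apply integrableOn_of_bounded' (M := W (T - y))
          ((measure_mono Ioc_subset_Icc_self).trans_lt isCompact_Icc.measure_lt_top).ne
        · apply (hm.measurable.aestronglyMeasurable (μ := ν.restrict (Ioc xs T))).congr
          filter_upwards [ae_restrict_mem measurableSet_Ioc] with u hu
          exact (hbeyond u hu.1).symm
        · filter_upwards [ae_restrict_mem measurableSet_Ioc] with u hu
          rw [hbeyond u hu.1, Real.norm_eq_abs, abs_of_nonneg (hWnn _)]
          exact hWmono (by linarith [hu.2])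
      have hsub : Icc y T ⊆ (Ico y xs ∪ {xs}) ∪ Ioc xs T := by
        intro u hu
        rcases lt_trichotomy u xs with h | h | h
        · exact Or.inl (Or.inl ⟨hu.1, h⟩)
        · exact Or.inl (Or.inr (by simp [h]))
        · exact Or.inr ⟨h, hu.2⟩
      refine ⟨((hIcoInt.union p2).union p3).mono_set hsub,
        max (C + C * B) (max (f xs) (W (T - y))), ?_⟩
      intro v hv
      rcases lt_trichotomy v xs with h | h | h
      · exact le_trans (hfb v hv.1 h) (le_max_left _ _)
      · rw [h]
        exact le_trans (le_max_left _ _) (le_max_right _ _)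
      · rw [hbeyond v h]
        exact le_trans (le_trans (hWmono (by linarith [hv.2])) (le_max_right _ _))
          (le_max_right _ _)
lemma keyAll (W : ℝ → ℝ) (hWmono : Monotone W) (hWneg : ∀ x < (0:ℝ), W x = 0)
    (hWnn : ∀ x, 0 ≤ W x)
    (ν : Measure ℝ) [IsLocallyFiniteMeasure ν] (y : ℝ) (f : ℝ → ℝ)
    (feq : ∀ x, f x = W (x - y) + ∫ u in Icc y x, W (x - u) * f u ∂ν)
    (fnn : ∀ x, 0 ≤ f x) :
    ∀ T : ℝ, IntegrableOn f (Icc y T) ν ∧ ∃ M, ∀ v ∈ Icc y T, f v ≤ M := by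
  by_cases hA : ∀ s : ℝ, 0 < s → 0 < W s
  · exact keyA W hWmono hWneg hWnn ν y f feq fnn hA
  · push_neg at hA
    obtain ⟨σ, hσ0, hσle⟩ := hA
    exact keyB W hWmono hWneg hWnn ν y f feq fnn hσ0 (le_antisymm hσle (hWnn σ))

lemma gInt (W : ℝ → ℝ) (hWmono : Monotone W) (hWneg : ∀ x < (0:ℝ), W x = 0)
    (hWnn : ∀ x, 0 ≤ W x)
    (ν : Measure ℝ) [IsLocallyFiniteMeasure ν] (y : ℝ) (f : ℝ → ℝ)
    (feq : ∀ x, f x = W (x - y) + ∫ u in Icc y x, W (x - u) * f u ∂ν)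
    (fnn : ∀ x, 0 ≤ f x) :
    ∀ x : ℝ, IntegrableOn (fun u => W (x - u) * f u) (Icc y x) ν := by
  intro x
  rcases lt_or_ge x y with h | h
  · rw [Icc_eq_empty (not_le.2 h)]
    exact integrableOn_empty
  · obtain ⟨hint, -⟩ := keyAll W hWmono hWneg hWnn ν y f feq fnn x
    apply Integrable.bdd_mul (c := W (x - y)) hint
      (wk_meas W hWmono x).aestronglyMeasurable
    filter_upwards [ae_restrict_mem measurableSet_Icc] with u hu
    rw [Real.norm_eq_abs, abs_of_nonneg (hWnn _)]
    exact hWmono (by linarith [hu.1])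

theorem lemma_mon (W : ℝ → ℝ) (hWmono : Monotone W) (hWneg : ∀ x < (0 : ℝ), W x = 0)
    (hWnn : ∀ x, 0 ≤ W x)
    (ν : Measure ℝ) [IsLocallyFiniteMeasure ν]
    (Wnu : ℝ → ℝ → ℝ)
    (heq : ∀ x y, Wnu x y = W (x - y) + ∫ u in Set.Icc y x, W (x - u) * Wnu u y ∂ν)
    (hWnunn : ∀ x y, 0 ≤ Wnu x y)
    (huniq : ∀ y (G : ℝ → ℝ),
      (∀ x, G x = W (x - y) + ∫ u in Set.Icc y x, W (x - u) * G u ∂ν) →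
      (∀ T, ∃ M, ∀ x ∈ Set.Icc y T, |G x| ≤ M) → ∀ x, G x = Wnu x y) :
    (∀ y x₁ x₂, y ≤ x₁ → x₁ ≤ x₂ → Wnu x₁ y ≤ Wnu x₂ y) ∧
      (∀ x y₁ y₂, y₁ ≤ y₂ → y₂ ≤ x → Wnu x y₂ ≤ Wnu x y₁) := by
  constructor
  · -- monotone in x
    intro y x₁ x₂ hyx₁ hx₁x₂
    have feq : ∀ x, Wnu x y = W (x - y) + ∫ u in Icc y x, W (x - u) * Wnu u y ∂ν :=
      fun x => heq x y
    have fnn : ∀ x, 0 ≤ Wnu x y := fun x => hWnunn x y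
    have hg := gInt W hWmono hWneg hWnn ν y (fun u => Wnu u y) feq fnn
    have h1 : ∫ u in Icc y x₁, W (x₁ - u) * Wnu u y ∂ν
        ≤ ∫ u in Icc y x₁, W (x₂ - u) * Wnu u y ∂ν :=
      setIntegral_mono_on (hg x₁) ((hg x₂).mono_set (Icc_subset_Icc_right hx₁x₂))
        measurableSet_Icc
        (fun u _ => mul_le_mul_of_nonneg_right (hWmono (by linarith)) (fnn u))
    have h2 : ∫ u in Icc y x₁, W (x₂ - u) * Wnu u y ∂ν
        ≤ ∫ u in Icc y x₂, W (x₂ - u) * Wnu u y ∂ν :=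
      setIntegral_mono_set (hg x₂)
        (Filter.Eventually.of_forall fun u => mul_nonneg (hWnn _) (fnn u))
        ((Icc_subset_Icc_right hx₁x₂).eventuallyLE)
    have e1 := heq x₁ y
    have e2 := heq x₂ y
    have hW : W (x₁ - y) ≤ W (x₂ - y) := hWmono (by linarith)
    linarith
  · -- antitone in y
    intro x y₁ y₂ hy12 hy2x
    have feq₁ : ∀ z, Wnu z y₁ = W (z - y₁) + ∫ u in Icc y₁ z, W (z - u) * Wnu u y₁ ∂ν :=
      fun z => heq z y₁
    have feq₂ : ∀ z, Wnu z y₂ = W (z - y₂) + ∫ u in Icc y₂ z, W (z - u) * Wnu u y₂ ∂ν :=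
      fun z => heq z y₂
    have fnn₁ : ∀ z, 0 ≤ Wnu z y₁ := fun z => hWnunn z y₁
    have fnn₂ : ∀ z, 0 ≤ Wnu z y₂ := fun z => hWnunn z y₂
    have hg₁ := gInt W hWmono hWneg hWnn ν y₁ (fun u => Wnu u y₁) feq₁ fnn₁
    have hg₂ := gInt W hWmono hWneg hWnn ν y₂ (fun u => Wnu u y₂) feq₂ fnn₂
    have hkey₂ := keyAll W hWmono hWneg hWnn ν y₂ (fun u => Wnu u y₂) feq₂ fnn₂
    set H : ℝ → ℝ := fun u => Wnu u y₁ - Wnu u y₂ with hH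
    -- integrability of the H-integrand
    have hHint : ∀ z, y₂ ≤ z → IntegrableOn (fun u => W (z - u) * H u) (Icc y₂ z) ν := by
      intro z hz
      have ha : IntegrableOn (fun u => W (z - u) * Wnu u y₁) (Icc y₂ z) ν :=
        (hg₁ z).mono_set (Icc_subset_Icc_left hy12)
      have hb : IntegrableOn (fun u => W (z - u) * Wnu u y₂) (Icc y₂ z) ν := hg₂ z
      exact (ha.sub hb).congr (Filter.Eventually.of_forall fun u => by
        simp only [Pi.sub_apply, hH]; ring)
    -- the equation for H
    have hHeq : ∀ z, y₂ ≤ z → H z = ((W (z - y₁) - W (z - y₂))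
        + ∫ u in Ico y₁ y₂, W (z - u) * Wnu u y₁ ∂ν)
        + ∫ u in Icc y₂ z, W (z - u) * H u ∂ν := by
      intro z hz
      have hsplit : Icc y₁ z = Ico y₁ y₂ ∪ Icc y₂ z := (Ico_union_Icc_eq_Icc hy12 hz).symm
      have hdisj : Disjoint (Ico y₁ y₂) (Icc y₂ z) := by
        apply Set.disjoint_left.2
        intro u hu1 hu2
        exact absurd hu2.1 (not_le.2 hu1.2)
      have hsubA : Ico y₁ y₂ ⊆ Icc y₁ z := fun u hu => ⟨hu.1, by linarith [hu.2]⟩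
      have hsubB : Icc y₂ z ⊆ Icc y₁ z := Icc_subset_Icc_left hy12
      have e1 : ∫ u in Icc y₁ z, W (z - u) * Wnu u y₁ ∂ν
          = ∫ u in Ico y₁ y₂, W (z - u) * Wnu u y₁ ∂ν
            + ∫ u in Icc y₂ z, W (z - u) * Wnu u y₁ ∂ν := by
        rw [hsplit, setIntegral_union hdisj measurableSet_Icc
          ((hg₁ z).mono_set hsubA) ((hg₁ z).mono_set hsubB)]
      have e2 : ∫ u in Icc y₂ z, W (z - u) * Wnu u y₁ ∂ν
          - ∫ u in Icc y₂ z, W (z - u) * Wnu u y₂ ∂ν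
          = ∫ u in Icc y₂ z, W (z - u) * H u ∂ν := by
        rw [← integral_sub ((hg₁ z).mono_set hsubB) (hg₂ z)]
        congr 1
        funext u
        simp only [hH]
        ring
      have h3 := feq₁ z
      have h4 := feq₂ z
      simp only [hH]
      rw [h3, h4, e1]
      linarith [e2]
    have hbnn : ∀ z, y₂ ≤ z → 0 ≤ (W (z - y₁) - W (z - y₂))
        + ∫ u in Ico y₁ y₂, W (z - u) * Wnu u y₁ ∂ν := by
      intro z _
      have h1 : W (z - y₂) ≤ W (z - y₁) := hWmono (by linarith)
      have h2 : 0 ≤ ∫ u in Ico y₁ y₂, W (z - u) * Wnu u y₁ ∂ν :=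
        setIntegral_nonneg measurableSet_Ico (fun u _ => mul_nonneg (hWnn _) (fnn₁ u))
      linarith
    -- main argument by contradiction
    by_contra hcon
    push_neg at hcon
    set A : Set ℝ := {z : ℝ | y₂ ≤ z ∧ H z < 0} with hA
    have hAne : A.Nonempty := ⟨x, hy2x, by simp only [hH]; linarith⟩
    have hAbdd : BddBelow A := ⟨y₂, fun a ha => ha.1⟩
    set x₀ := sInf A with hx₀
    have hx₀y₂ : y₂ ≤ x₀ := le_csInf hAne fun a ha => ha.1
    have hHnn_lt : ∀ z, y₂ ≤ z → z < x₀ → 0 ≤ H z := by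
      intro z hz hzx
      by_contra hneg
      push_neg at hneg
      exact absurd (csInf_le hAbdd ⟨hz, hneg⟩) (not_le.2 hzx)
    -- H x₀ ≥ 0 via the atom condition
    have hatom := atom_small W hWnn ν x₀ (fun u => Wnu u x₀)
      (fun z => heq z x₀) (fun z => hWnunn z x₀)
    have hHx₀ : 0 ≤ H x₀ := by
      have heq₀ := hHeq x₀ hx₀y₂
      have hsplit₀ : Icc y₂ x₀ = Ico y₂ x₀ ∪ {x₀} := (Ico_union_right hx₀y₂).symm
      have hdisj₀ : Disjoint (Ico y₂ x₀) ({x₀} : Set ℝ) := by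
        apply Set.disjoint_left.2
        intro u hu1 hu2
        rw [mem_singleton_iff] at hu2
        exact absurd hu2 (ne_of_lt hu1.2)
      have hint₀ := hHint x₀ hx₀y₂
      have hsum : ∫ u in Icc y₂ x₀, W (x₀ - u) * H u ∂ν
          = ∫ u in Ico y₂ x₀, W (x₀ - u) * H u ∂ν
            + ∫ u in ({x₀} : Set ℝ), W (x₀ - u) * H u ∂ν := by
        rw [hsplit₀, setIntegral_union hdisj₀ (measurableSet_singleton _)
          (hint₀.mono_set (by rw [hsplit₀]; exact subset_union_left))
          (hint₀.mono_set (by rw [hsplit₀]; exact subset_union_right))]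
      have hsing : ∫ u in ({x₀} : Set ℝ), W (x₀ - u) * H u ∂ν
          = (ν {x₀}).toReal * (W 0 * H x₀) := by
        rw [Measure.restrict_singleton, integral_smul_measure, integral_dirac]
        simp [sub_self]
      have hIco0 : 0 ≤ ∫ u in Ico y₂ x₀, W (x₀ - u) * H u ∂ν :=
        setIntegral_nonneg measurableSet_Ico
          (fun u hu => mul_nonneg (hWnn _) (hHnn_lt u hu.1 hu.2))
      by_contra hneg
      push_neg at hneg
      have h1 : (ν {x₀}).toReal * W 0 * H x₀ ≤ H x₀ := by
        have hb := hbnn x₀ hx₀y₂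
        rw [heq₀] at hneg ⊢
        rw [hsum, hsing] at hneg ⊢
        nlinarith
      nlinarith [mul_pos (sub_pos.2 hatom) (show (0:ℝ) < -H x₀ by linarith)]
    -- contraction to the right of x₀
    set C := max 1 (W (x₀ + 1 - y₂)) with hC
    have hC1 : (1:ℝ) ≤ C := le_max_left _ _
    have hC0 : (0:ℝ) ≤ C := by linarith
    obtain ⟨δ, hδ0, hδ1, hδsmall⟩ := msmall_right ν x₀ (ε := 1/(2*C)) (by positivity)
    have hCν : C * (ν (Ioc x₀ (x₀ + δ))).toReal ≤ 1/2 := by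
      have hCpos : (0:ℝ) < C := by linarith
      rw [div_eq_mul_inv, one_mul] at hδsmall
      calc C * (ν (Ioc x₀ (x₀ + δ))).toReal ≤ C * (2*C)⁻¹ :=
            mul_le_mul_of_nonneg_left hδsmall.le hC0
        _ ≤ 1/2 := by
            rw [mul_inv, ← mul_assoc, mul_comm C 2⁻¹, mul_assoc,
              mul_inv_cancel₀ hCpos.ne', mul_one]
            norm_num
    obtain ⟨Mb, hMb⟩ := (hkey₂ (x₀ + 1)).2
    set img := (fun v => max (-(H v)) 0) '' Ioc x₀ (x₀ + δ) with himg
    have hIocne : (Ioc x₀ (x₀ + δ)).Nonempty := ⟨x₀ + δ, by constructor <;> linarith⟩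
    have himgne : img.Nonempty := hIocne.image _
    have hbddab : BddAbove img := by
      refine ⟨max Mb 0, ?_⟩
      rintro z ⟨v, hv, rfl⟩
      apply max_le_max _ le_rfl
      have h1 := hMb v ⟨by linarith [hv.1], by linarith [hv.2]⟩
      have h2 := fnn₁ v
      simp only [hH]
      linarith
    set s := sSup img with hs
    have hHlb : ∀ v ∈ Ioc x₀ (x₀ + δ), -(H v) ≤ s :=
      fun v hv => le_trans (le_max_left _ _) (le_csSup hbddab (mem_image_of_mem _ hv))
    have hs0 : 0 ≤ s :=
      le_trans (le_max_right _ _)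
        (le_csSup hbddab (mem_image_of_mem _ (show x₀ + δ ∈ Ioc x₀ (x₀ + δ) by
          constructor <;> linarith)))
    have hest : ∀ z ∈ Ioc x₀ (x₀ + δ), -(s/2) ≤ H z := by
      intro z hz
      have hy₂z : y₂ ≤ z := by linarith [hz.1]
      have heqz := hHeq z hy₂z
      have hsplitz : Icc y₂ z = Icc y₂ x₀ ∪ Ioc x₀ z := (Icc_union_Ioc_eq_Icc hx₀y₂ hz.1.le).symm
      have hdisjz : Disjoint (Icc y₂ x₀) (Ioc x₀ z) := by
        apply Set.disjoint_left.2
        intro u hu1 hu2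
        exact absurd hu1.2 (not_le.2 hu2.1)
      have hintz := hHint z hy₂z
      have hsubz1 : Icc y₂ x₀ ⊆ Icc y₂ z := Icc_subset_Icc_right hz.1.le
      have hsubz2 : Ioc x₀ z ⊆ Icc y₂ z := fun u hu => ⟨by linarith [hu.1], hu.2⟩
      have hsum : ∫ u in Icc y₂ z, W (z - u) * H u ∂ν
          = ∫ u in Icc y₂ x₀, W (z - u) * H u ∂ν + ∫ u in Ioc x₀ z, W (z - u) * H u ∂ν := by
        rw [hsplitz, setIntegral_union hdisjz measurableSet_Ioc
          (hintz.mono_set hsubz1) (hintz.mono_set hsubz2)]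
      have hfirst : 0 ≤ ∫ u in Icc y₂ x₀, W (z - u) * H u ∂ν := by
        apply setIntegral_nonneg measurableSet_Icc
        intro u hu
        apply mul_nonneg (hWnn _)
        rcases lt_or_eq_of_le hu.2 with h | h
        · exact hHnn_lt u hu.1 h
        · rw [h]; exact hHx₀
      have hsecond : -(s/2) ≤ ∫ u in Ioc x₀ z, W (z - u) * H u ∂ν := by
        have hmon := setIntegral_mono_on
          ((integrableOn_const_iff (C := -(C*s))).2
            (Or.inr ((measure_mono Ioc_subset_Icc_self).trans_lt
              isCompact_Icc.measure_lt_top)))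
          (hintz.mono_set hsubz2) measurableSet_Ioc ?_
        · rw [setIntegral_const, measureReal_def, smul_eq_mul] at hmon
          have hν1 : (ν (Ioc x₀ z)).toReal ≤ (ν (Ioc x₀ (x₀ + δ))).toReal := by
            apply ENNReal.toReal_mono
              ((measure_mono Ioc_subset_Icc_self).trans_lt isCompact_Icc.measure_lt_top).ne
            exact measure_mono (Ioc_subset_Ioc_right hz.2)
          have hν0 : 0 ≤ (ν (Ioc x₀ z)).toReal := ENNReal.toReal_nonneg
          have hCs : 0 ≤ C * s := mul_nonneg hC0 hs0
          have : (ν (Ioc x₀ z)).toReal * (C * s) ≤ s/2 := by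
            calc (ν (Ioc x₀ z)).toReal * (C * s) ≤ (ν (Ioc x₀ (x₀ + δ))).toReal * (C * s) :=
                  mul_le_mul_of_nonneg_right hν1 hCs
              _ = (C * (ν (Ioc x₀ (x₀ + δ))).toReal) * s := by ring
              _ ≤ (1/2) * s := mul_le_mul_of_nonneg_right hCν hs0
              _ = s/2 := by ring
          nlinarith
        · intro u hu
          have huI : u ∈ Ioc x₀ (x₀ + δ) := ⟨hu.1, by linarith [hu.2, hz.2]⟩
          have hWb : W (z - u) ≤ C := by
            apply le_trans (hWmono (show z - u ≤ x₀ + 1 - y₂ by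
              have := hu.1
              have := hz.2
              have : z - u ≤ δ := by linarith [hu.1]
              linarith [hδ1, hx₀y₂])) (le_max_right _ _)
          have h1 : W (z - u) * (-s) ≤ W (z - u) * H u :=
            mul_le_mul_of_nonneg_left (by linarith [hHlb u huI]) (hWnn _)
          have h2 : C * (-s) ≤ W (z - u) * (-s) :=
            mul_le_mul_of_nonpos_right hWb (by linarith)
          calc -(C*s) = C * (-s) := by ring
            _ ≤ W (z - u) * (-s) := h2
            _ ≤ W (z - u) * H u := h1
      have hb := hbnn z hy₂z
      rw [heqz, hsum]
      linarith
    have hs2 : s ≤ s/2 := by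
      apply csSup_le himgne
      rintro z ⟨v, hv, rfl⟩
      apply max_le _ (by linarith)
      linarith [hest v hv]
    have hsneg : s ≤ 0 := by linarith
    have hlb : ∀ a ∈ A, x₀ + δ ≤ a := by
      intro a ha
      by_contra hcc
      push_neg at hcc
      have hy₂a := ha.1
      have hHa := ha.2
      rcases lt_trichotomy a x₀ with h | h | h
      · exact absurd hHa (not_lt.2 (hHnn_lt a hy₂a h))
      · rw [h] at hHa
        exact absurd hHa (not_lt.2 hHx₀)
      · have h5 := hest a ⟨h, hcc.le⟩
        have h6 : (0:ℝ) ≤ -(s/2) := by linarith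
        exact absurd hHa (not_lt.2 (le_trans h6 h5))
    have hfinal : x₀ + δ ≤ x₀ := le_csInf hAne hlb
    linarith
end

section
/- Let W^{(q)} be nonnegative, vanishing on (-∞,0), with W^{(q)}(0) = 1/d for some d > 0. Define recursively W_k(x,y) = W_{k-1}(x,y) + d(e^{p_k/d}-1) W^{(q)}(x-a_k) W_{k-1}(a_k,y) for k ≥ 2, with W₁(x,y) = W^{(q)}(x-y) + d(e^{p₁/d}-1) W^{(q)}(x-a₁) W^{(q)}(a₁-y), where a₁ < a₂ < ... < a_n and pᵢ > 0. Then W_n satisfies W_n(x,y) = W^{(q)}(x-y) + ∫_{[y,x]} W^{(q)}(x-z) W_n(z,y) ν_n(dz) for all x, y ∈ ℝ, where ν_n = Σ_{i=1}^n d(1-e^{-pᵢ/d}) δ_{aᵢ}. -/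
open MeasureTheory

private lemma restrict_finsum {ι} (s : Finset ι) (μ : ι → Measure ℝ) (t : Set ℝ) :
    (∑ i ∈ s, μ i).restrict t = ∑ i ∈ s, (μ i).restrict t := by
  classical
  induction s using Finset.induction with
  | empty => simp
  | insert a s h ih => simp [Finset.sum_insert h, Measure.restrict_add, ih]

theorem finite_mixture_scale_function (W : ℝ → ℝ) (d : ℝ) (hd : 0 < d)
    (hWnn : ∀ x, 0 ≤ W x) (hWneg : ∀ x < (0 : ℝ), W x = 0) (hW0 : W 0 = 1 / d)
    (n : ℕ) (hn : 1 ≤ n) (a p : ℕ → ℝ) (hp : ∀ i, 0 < p i)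
    (hamono : ∀ i j, 1 ≤ i → i < j → j ≤ n → a i < a j)
    (Wk : ℕ → ℝ → ℝ → ℝ)
    (hbase : ∀ x y, Wk 1 x y =
      W (x - y) + d * (Real.exp (p 1 / d) - 1) * W (x - a 1) * W (a 1 - y))
    (hrec : ∀ k, 2 ≤ k → k ≤ n → ∀ x y, Wk k x y =
      Wk (k - 1) x y + d * (Real.exp (p k / d) - 1) * W (x - a k) * Wk (k - 1) (a k) y) :
    ∀ x y : ℝ, Wk n x y = W (x - y) +
      ∫ z in Set.Icc y x, W (x - z) * Wk n z y
        ∂(∑ i ∈ Finset.Icc 1 n,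
            ENNReal.ofReal (d * (1 - Real.exp (-(p i) / d))) • Measure.dirac (a i)) := by
  classical
  have hd' : d ≠ 0 := ne_of_gt hd
  -- key algebraic identity
  have key : ∀ q u v : ℝ,
      d * (1 - Real.exp (-q / d)) * (u * (v + d * (Real.exp (q / d) - 1) * (1 / d) * v))
        = d * (Real.exp (q / d) - 1) * u * v := by
    intro q u v
    have hE : Real.exp (q / d) ≠ 0 := Real.exp_ne_zero _
    rw [neg_div, Real.exp_neg]
    field_simp
    ring
  -- vanishing lemma
  have hvan : ∀ k, 1 ≤ k → k ≤ n → ∀ x y : ℝ, x < y → Wk k x y = 0 := by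
    intro k hk1
    induction k, hk1 using Nat.le_induction with
    | base =>
      intro _ x y hxy
      rw [hbase]
      rcases le_or_gt (a 1) x with h | h
      · rw [hWneg (x - y) (by linarith), hWneg (a 1 - y) (by linarith)]; ring
      · rw [hWneg (x - y) (by linarith), hWneg (x - a 1) (by linarith)]; ring
    | succ k hk ih =>
      intro hkn x y hxy
      rw [hrec (k + 1) (by omega) hkn]
      simp only [Nat.add_sub_cancel]
      rcases le_or_gt (a (k + 1)) x with h | h
      · rw [ih (by omega) x y hxy, ih (by omega) (a (k + 1)) y (by linarith)]; ring
      · rw [ih (by omega) x y hxy, hWneg (x - a (k + 1)) (by linarith)]; ring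
  -- the discrete sum identity
  have hsum : ∀ k, 1 ≤ k → k ≤ n → ∀ x y : ℝ, Wk k x y = W (x - y) +
      ∑ i ∈ Finset.Icc 1 k,
        d * (1 - Real.exp (-(p i) / d)) * (W (x - a i) * Wk k (a i) y) := by
    intro k hk1
    induction k, hk1 using Nat.le_induction with
    | base =>
      intro _ x y
      rw [Finset.Icc_self, Finset.sum_singleton, hbase x y, hbase (a 1) y, sub_self, hW0]
      have h := key (p 1) (W (x - a 1)) (W (a 1 - y))
      linear_combination -h
    | succ k hk ih =>
      intro hkn x y
      have hkn' : k ≤ n := by omega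
      have h2 : 2 ≤ k + 1 := by omega
      rw [Finset.sum_Icc_succ_top (by omega : 1 ≤ k + 1)]
      have hterm : ∀ i ∈ Finset.Icc 1 k,
          d * (1 - Real.exp (-(p i) / d)) * (W (x - a i) * Wk (k + 1) (a i) y)
            = d * (1 - Real.exp (-(p i) / d)) * (W (x - a i) * Wk k (a i) y) := by
        intro i hi
        simp only [Finset.mem_Icc] at hi
        have hlt : a i < a (k + 1) := hamono i (k + 1) hi.1 (by omega) hkn
        rw [hrec (k + 1) h2 hkn (a i) y]
        simp only [Nat.add_sub_cancel]
        rw [hWneg (a i - a (k + 1)) (by linarith)]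
        ring
      rw [Finset.sum_congr rfl hterm]
      rw [hrec (k + 1) h2 hkn x y]
      simp only [Nat.add_sub_cancel]
      rw [ih hkn' x y]
      rw [hrec (k + 1) h2 hkn (a (k + 1)) y]
      simp only [Nat.add_sub_cancel]
      rw [sub_self, hW0]
      have h := key (p (k + 1)) (W (x - a (k + 1))) (Wk k (a (k + 1)) y)
      linear_combination -h
  -- now the integral computation
  intro x y
  have hint : ∫ z in Set.Icc y x, W (x - z) * Wk n z y
        ∂(∑ i ∈ Finset.Icc 1 n,
            ENNReal.ofReal (d * (1 - Real.exp (-(p i) / d))) • Measure.dirac (a i))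
      = ∑ i ∈ Finset.Icc 1 n,
          d * (1 - Real.exp (-(p i) / d)) * (W (x - a i) * Wk n (a i) y) := by
    rw [restrict_finsum]
    rw [integral_finset_sum_measure (by
      intro i _
      rw [Measure.restrict_smul]
      refine Integrable.smul_measure ?_ ENNReal.ofReal_ne_top
      rw [restrict_dirac]
      split_ifs
      · exact (integrable_const _).congr
          (MeasureTheory.ae_eq_dirac (fun z => W (x - z) * Wk n z y)).symm
      · exact integrable_zero_measure)]
    refine Finset.sum_congr rfl fun i hi => ?_
    simp only [Finset.mem_Icc] at hi
    have hb : 0 ≤ d * (1 - Real.exp (-(p i) / d)) := by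
      have h1 : Real.exp (-(p i) / d) < 1 := by
        rw [Real.exp_lt_one_iff]
        have := hp i
        exact div_neg_of_neg_of_pos (by linarith) hd
      nlinarith
    rw [Measure.restrict_smul, integral_smul_measure, ENNReal.toReal_ofReal hb]
    have hsid : ∫ z in Set.Icc y x, W (x - z) * Wk n z y ∂(Measure.dirac (a i))
        = if a i ∈ Set.Icc y x then W (x - a i) * Wk n (a i) y else 0 :=
      setIntegral_dirac (fun z => W (x - z) * Wk n z y) (a i) _
    rw [hsid]
    rw [smul_eq_mul]
    rcases le_or_gt y (a i) with hyai | hyai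
    · rcases le_or_gt (a i) x with haix | haix
      · rw [if_pos ⟨hyai, haix⟩]
      · rw [if_neg (by simp only [Set.mem_Icc]; intro; linarith),
          hWneg (x - a i) (by linarith)]
        ring
    · rw [if_neg (by simp only [Set.mem_Icc]; intro h; linarith),
        hvan n hn le_rfl (a i) y hyai]
      ring
  rw [hint]
  exact hsum n hn le_rfl x y
end

section
/- Let (Fₙ)ₙ be a nonincreasing sequence of continuous functions on a compact interval [y,T] defined by Fₙ(x) = ∫_{(y,x)} e^{-sₙ(x-z)} W(x-z) μ(dz), where μ is a finite diffuse measure on [y,T], W is bounded nonnegative on [0, T-y], and sₙ ↑ ∞. Then Fₙ(x) → 0 for every x ∈ [y,T] and, by Dini's theorem, the convergence is uniform on [y,T]; hence for any ε > 0 there exists s₀ > 0 with sup_{x∈[y,T]} ∫_{(y,x)} e^{-s₀(x-z)} W(x-z) μ(dz) < ε. -/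
open MeasureTheory

lemma shrink_aux (μ : Measure ℝ) [IsFiniteMeasure μ] (hdiff : ∀ x : ℝ, μ {x} = 0)
    (ε : ENNReal) (hε : 0 < ε) (x : ℝ) :
    ∃ δ > (0:ℝ), μ (Set.Ioo (x - δ) (x + δ)) < ε := by
  set S : ℕ → Set ℝ := fun n => Set.Ioo (x - 1/(n+1)) (x + 1/(n+1)) with hS
  have hiInter : (⋂ n, S n) = {x} := by
    ext z
    simp only [Set.mem_iInter, Set.mem_singleton_iff, hS, Set.mem_Ioo]
    constructor
    · intro h
      by_contra hne
      have habs : 0 < |z - x| := abs_pos.mpr (sub_ne_zero.mpr hne)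
      obtain ⟨n, hn⟩ := exists_nat_one_div_lt habs
      have := h n
      have : |z - x| < 1/(n+1) := abs_sub_lt_iff.mpr ⟨by linarith [this.2], by linarith [this.1]⟩
      linarith
    · rintro rfl n
      have : (0:ℝ) < 1/(n+1) := by positivity
      constructor <;> linarith
  have htend : Filter.Tendsto (μ ∘ S) Filter.atTop (nhds (μ (⋂ n, S n))) := by
    apply tendsto_measure_iInter_atTop
    · exact fun n => measurableSet_Ioo.nullMeasurableSet
    · intro m n hmn
      have h1 : (1:ℝ)/(n+1) ≤ 1/(m+1) := by
        apply one_div_le_one_div_of_le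
        · positivity
        · exact_mod_cast by linarith
      apply Set.Ioo_subset_Ioo <;> linarith
    · exact ⟨0, measure_ne_top μ _⟩
  rw [hiInter, hdiff x] at htend
  have := htend.eventually_lt_const hε
  obtain ⟨n, hn⟩ := this.exists
  exact ⟨1/(n+1), by positivity, hn⟩

lemma shrink_uniform (μ : Measure ℝ) [IsFiniteMeasure μ] (hdiff : ∀ x : ℝ, μ {x} = 0)
    (y T : ℝ) (hyT : y ≤ T) (ε : ENNReal) (hε : 0 < ε) :
    ∃ δ > (0:ℝ), ∀ x ∈ Set.Icc y T, μ (Set.Ioo (x - δ) x) < ε := by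
  choose δf hδpos hδ using shrink_aux μ hdiff ε hε
  have hcov : Set.Icc y T ⊆ ⋃ c ∈ Set.Icc y T, Metric.ball c (δf c / 2) := by
    intro x hx
    exact Set.mem_biUnion hx (Metric.mem_ball_self (by linarith [hδpos x]))
  obtain ⟨t, htcov⟩ := isCompact_Icc.elim_nhds_subcover' (fun c _ => Metric.ball c (δf c / 2))
    (fun c _ => Metric.ball_mem_nhds c (by linarith [hδpos c]))
  have hy : y ∈ Set.Icc y T := Set.mem_Icc.mpr ⟨le_refl y, hyT⟩
  have h := htcov hy
  simp only [Set.mem_iUnion] at h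
  obtain ⟨c0, hc0, -⟩ := h
  have htne : t.Nonempty := ⟨c0, hc0⟩
  set δ : ℝ := t.inf' htne (fun c => δf c / 2) with hδdef
  have hδpos' : 0 < δ := by
    rw [hδdef, Finset.lt_inf'_iff]
    exact fun c _ => by linarith [hδpos (c:ℝ)]
  refine ⟨δ, hδpos', fun x hx => ?_⟩
  have h := htcov hx
  simp only [Set.mem_iUnion] at h
  obtain ⟨c, hct, hc⟩ := h
  have hδle : δ ≤ δf c / 2 := Finset.inf'_le _ hct
  rw [Metric.mem_ball, Real.dist_eq] at hc
  have habs := abs_lt.mp hc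
  calc μ (Set.Ioo (x - δ) x) ≤ μ (Set.Ioo ((c:ℝ) - δf c) ((c:ℝ) + δf c)) := by
        apply measure_mono
        apply Set.Ioo_subset_Ioo <;> linarith
    _ < ε := hδ c


theorem dini_tilting (y T M : ℝ) (hyT : y ≤ T)
    (μ : Measure ℝ) (hfin : μ (Set.Icc y T) ≠ ⊤) (hdiff : ∀ x : ℝ, μ {x} = 0)
    (W : ℝ → ℝ) (hWm : Measurable W)
    (hW : ∀ u ∈ Set.Icc (0 : ℝ) (T - y), 0 ≤ W u ∧ W u ≤ M)
    (s : ℕ → ℝ) (hs0 : ∀ n, 0 < s n) (hsmono : Monotone s)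
    (hstop : Filter.Tendsto s Filter.atTop Filter.atTop) :
    (∀ x ∈ Set.Icc y T,
      Filter.Tendsto
        (fun n => ∫ z in Set.Ioo y x, Real.exp (-(s n) * (x - z)) * W (x - z) ∂μ)
        Filter.atTop (nhds 0)) ∧
    TendstoUniformlyOn
      (fun n x => ∫ z in Set.Ioo y x, Real.exp (-(s n) * (x - z)) * W (x - z) ∂μ)
      (fun _ => 0) Filter.atTop (Set.Icc y T) ∧
    (∀ ε > (0 : ℝ), ∃ s₀ > (0 : ℝ), ∀ x ∈ Set.Icc y T,
      (∫ z in Set.Ioo y x, Real.exp (-s₀ * (x - z)) * W (x - z) ∂μ) < ε) := by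
  set M' : ℝ := max M 1 with hM'def
  have hM' : (0:ℝ) < M' := lt_of_lt_of_le one_pos (le_max_right _ _)
  have hW' : ∀ u ∈ Set.Icc (0 : ℝ) (T - y), 0 ≤ W u ∧ W u ≤ M' :=
    fun u hu => ⟨(hW u hu).1, le_trans (hW u hu).2 (le_max_left _ _)⟩
  set ν : Measure ℝ := μ.restrict (Set.Icc y T) with hνdef
  haveI hνfin : IsFiniteMeasure ν := by
    constructor
    rw [hνdef, Measure.restrict_apply_univ]
    exact hfin.lt_top
  have hνdiff : ∀ x : ℝ, ν {x} = 0 := by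
    intro x
    rw [hνdef, Measure.restrict_apply (measurableSet_singleton x)]
    exact le_antisymm (le_trans (measure_mono Set.inter_subset_left) (hdiff x).le) zero_le
  set C : ℝ := (μ (Set.Icc y T)).toReal with hCdef
  have hC0 : 0 ≤ C := ENNReal.toReal_nonneg
  -- nonnegativity
  have hFnn : ∀ (r : ℝ) (x : ℝ), x ∈ Set.Icc y T →
      0 ≤ ∫ z in Set.Ioo y x, Real.exp (-r * (x - z)) * W (x - z) ∂μ := by
    intro r x hx
    apply setIntegral_nonneg measurableSet_Ioo
    intro z hz
    have hWz := hW' (x - z) ⟨by linarith [hz.2], by linarith [hz.1, hx.2]⟩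
    exact mul_nonneg (Real.exp_pos _).le hWz.1
  -- key upper bound
  have hbound : ∀ (r : ℝ), 0 < r → ∀ (δ : ℝ), 0 < δ → ∀ x ∈ Set.Icc y T,
      (∫ z in Set.Ioo y x, Real.exp (-r * (x - z)) * W (x - z) ∂μ)
        ≤ M' * Real.exp (-r * δ) * C + M' * (ν (Set.Ioo (x - δ) x)).toReal := by
    intro r hr δ hδ x hx
    have hsub : Set.Ioo y x ⊆ Set.Icc y T :=
      fun z hz => ⟨hz.1.le, le_trans hz.2.le hx.2⟩
    haveI : IsFiniteMeasure (μ.restrict (Set.Ioo y x)) := by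
      constructor
      rw [Measure.restrict_apply_univ]
      exact lt_of_le_of_lt (measure_mono hsub) hfin.lt_top
    set f : ℝ → ℝ := fun z => Real.exp (-r * (x - z)) * W (x - z) with hfdef
    set g : ℝ → ℝ := fun z =>
      M' * Real.exp (-r * δ) + Set.indicator (Set.Ioo (x - δ) x) (fun _ => M') z with hgdef
    have hfm : Measurable f := by
      apply Measurable.mul
      · exact (((measurable_const.sub measurable_id).const_mul (-r)).exp)
      · exact hWm.comp (measurable_const.sub measurable_id)
    have hfb : ∀ z ∈ Set.Ioo y x, f z ≤ M' := by
      intro z hz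
      have hWz := hW' (x - z) ⟨by linarith [hz.2], by linarith [hz.1, hx.2]⟩
      have hexp : Real.exp (-r * (x - z)) ≤ 1 := by
        rw [Real.exp_le_one_iff]
        nlinarith [hz.2]
      calc f z ≤ 1 * M' := mul_le_mul hexp hWz.2 hWz.1 zero_le_one
        _ = M' := one_mul _
    have hfint : IntegrableOn f (Set.Ioo y x) μ := by
      apply Integrable.mono' (integrable_const M') hfm.aestronglyMeasurable
      filter_upwards [ae_restrict_mem measurableSet_Ioo] with z hz
      rw [Real.norm_eq_abs, abs_of_nonneg]
      · exact hfb z hz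
      · have hWz := hW' (x - z) ⟨by linarith [hz.2], by linarith [hz.1, hx.2]⟩
        exact mul_nonneg (Real.exp_pos _).le hWz.1
    have hgint : IntegrableOn g (Set.Ioo y x) μ :=
      (integrable_const _).add ((integrable_const M').indicator measurableSet_Ioo)
    have hmono : (∫ z in Set.Ioo y x, f z ∂μ) ≤ ∫ z in Set.Ioo y x, g z ∂μ := by
      apply setIntegral_mono_on hfint hgint measurableSet_Ioo
      intro z hz
      rw [hgdef]
      by_cases hmem : z ∈ Set.Ioo (x - δ) x
      · simp only [Set.indicator_of_mem hmem]
        have h1 : (0:ℝ) ≤ M' * Real.exp (-r * δ) :=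
          mul_nonneg hM'.le (Real.exp_pos _).le
        linarith [hfb z hz]
      · simp only [Set.indicator_of_notMem hmem, add_zero]
        have hzle : z ≤ x - δ := by
          by_contra hcon
          exact hmem ⟨by linarith, hz.2⟩
        have hWz := hW' (x - z) ⟨by linarith [hz.2], by linarith [hz.1, hx.2]⟩
        have hexp : Real.exp (-r * (x - z)) ≤ Real.exp (-r * δ) := by
          apply Real.exp_le_exp.mpr
          nlinarith
        calc f z ≤ Real.exp (-r * δ) * M' :=
              mul_le_mul hexp hWz.2 hWz.1 (Real.exp_pos _).le
          _ = M' * Real.exp (-r * δ) := mul_comm _ _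
    have hgcalc : (∫ z in Set.Ioo y x, g z ∂μ)
        = (μ (Set.Ioo y x)).toReal * (M' * Real.exp (-r * δ))
          + (μ.restrict (Set.Ioo y x) (Set.Ioo (x - δ) x)).toReal * M' := by
      rw [hgdef]
      rw [integral_add (integrable_const _)
        ((integrable_const M').indicator measurableSet_Ioo)]
      rw [integral_const, integral_indicator_const _ measurableSet_Ioo]
      simp [Measure.restrict_apply_univ, smul_eq_mul, Measure.real]
    have h1 : (μ (Set.Ioo y x)).toReal ≤ C := by
      rw [hCdef]
      exact ENNReal.toReal_mono hfin (measure_mono hsub)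
    have h2 : (μ.restrict (Set.Ioo y x) (Set.Ioo (x - δ) x)).toReal
        ≤ (ν (Set.Ioo (x - δ) x)).toReal := by
      apply ENNReal.toReal_mono (measure_ne_top ν _)
      rw [Measure.restrict_apply measurableSet_Ioo, hνdef,
        Measure.restrict_apply measurableSet_Ioo]
      exact measure_mono (Set.inter_subset_inter_right _ hsub)
    calc (∫ z in Set.Ioo y x, f z ∂μ) ≤ ∫ z in Set.Ioo y x, g z ∂μ := hmono
      _ = (μ (Set.Ioo y x)).toReal * (M' * Real.exp (-r * δ))
          + (μ.restrict (Set.Ioo y x) (Set.Ioo (x - δ) x)).toReal * M' := hgcalc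
      _ ≤ C * (M' * Real.exp (-r * δ)) + (ν (Set.Ioo (x - δ) x)).toReal * M' := by
          apply add_le_add
          · exact mul_le_mul_of_nonneg_right h1
              (mul_nonneg hM'.le (Real.exp_pos _).le)
          · exact mul_le_mul_of_nonneg_right h2 hM'.le
      _ = M' * Real.exp (-r * δ) * C + M' * (ν (Set.Ioo (x - δ) x)).toReal := by ring
  -- uniform convergence
  have huni : TendstoUniformlyOn
      (fun n x => ∫ z in Set.Ioo y x, Real.exp (-(s n) * (x - z)) * W (x - z) ∂μ)
      (fun _ => 0) Filter.atTop (Set.Icc y T) := by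
    rw [Metric.tendstoUniformlyOn_iff]
    intro ε hε
    obtain ⟨δ, hδpos, hδ⟩ := shrink_uniform ν hνdiff y T hyT
      (ENNReal.ofReal (ε / (2 * M'))) (by positivity)
    have htend : Filter.Tendsto (fun n => M' * Real.exp (-(s n) * δ) * C)
        Filter.atTop (nhds 0) := by
      have h1 : Filter.Tendsto (fun n => -(s n) * δ) Filter.atTop Filter.atBot := by
        have := hstop.atTop_mul_const hδpos
        simpa [Function.comp_def, neg_mul] using Filter.tendsto_neg_atTop_atBot.comp this
      have h2 := Real.tendsto_exp_atBot.comp h1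
      have := (h2.const_mul M').mul_const C
      simpa using this
    have hev := htend.eventually_lt_const (show (0:ℝ) < ε/2 by positivity)
    filter_upwards [hev] with n hn x hx
    rw [dist_comm, dist_zero_right, Real.norm_eq_abs,
      abs_of_nonneg (hFnn (s n) x hx)]
    have hb := hbound (s n) (hs0 n) δ hδpos x hx
    have hsmall : (ν (Set.Ioo (x - δ) x)).toReal < ε / (2 * M') :=
      ENNReal.toReal_lt_of_lt_ofReal (hδ x hx)
    have : M' * (ν (Set.Ioo (x - δ) x)).toReal < M' * (ε / (2 * M')) :=
      mul_lt_mul_of_pos_left hsmall hM'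
    have heq : M' * (ε / (2 * M')) = ε / 2 := by field_simp
    calc (∫ z in Set.Ioo y x, Real.exp (-(s n) * (x - z)) * W (x - z) ∂μ)
        ≤ M' * Real.exp (-(s n) * δ) * C + M' * (ν (Set.Ioo (x - δ) x)).toReal := hb
      _ < ε := by linarith
  refine ⟨fun x hx => ?_, huni, fun ε hε => ?_⟩
  · simpa using huni.tendsto_at hx
  · rw [Metric.tendstoUniformlyOn_iff] at huni
    obtain ⟨N, hN⟩ := (huni ε hε).exists
    refine ⟨s N, hs0 N, fun x hx => ?_⟩
    have := hN x hx
    rw [dist_comm, dist_zero_right, Real.norm_eq_abs] at this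
    exact lt_of_le_of_lt (le_abs_self _) this
end
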